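/- arXiv:2006.13632 — 3 statements merged into one kernel-verified Lean document; each statement's English description precedes it below -/
import Mathlib

section
/- Let n ≥ 4 and 2 ≤ k ≤ n−1. Set A_{k,k} = B_{k−1,k} = {G ∈ M_{n−2}(K_n) : {i,i+1} ∉ G for every i ∈ [k−1], deg_G(1) = n−2, deg_G(i) = n−3 for every i ∈ {2,...,k−1}, and deg_G(k) < n−2}, and for i = k+1,...,n define N_{k,i} = {G ∈ A_{k,i−1} : G ∖ {{k,i}} ∈ A_{k,i−1} and G ∪ {{k,i}} ∈ A_{k,i−1}} and A_{k,i} = A_{k,i−1} ∖ N_{k,i}. Then A_{k,n} = B_{k,k+1} ⊔ C_k, a disjoint union, where B_{k,k+1} = {G ∈ A_{k,k} : {k,k+1} ∉ G, deg_G(k+1) < n−2, deg_G(k) = n−3} and C_k = {G ∈ A_{k,k} : for every i ∈ {k+1,...,n}, {k,i} ∉ G and deg_G(i) = n−2}. -/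
/-- Degree of vertex `v` in the edge set `H`. -/
def deg (H : Finset (Sym2 ℕ)) (v : ℕ) : ℕ := (H.filter (fun e => v ∈ e)).card

/-- Edge set of the complete graph `K_n` on vertex set `{1,…,n}`. -/
def EK (n : ℕ) : Finset (Sym2 ℕ) := (Finset.Icc 1 n).sym2.filter (fun e => ¬ e.IsDiag)

/-- The `r`-matching complex of `K_n`, as its set of faces. -/
def MK (n r : ℕ) : Set (Finset (Sym2 ℕ)) := {H | H ⊆ EK n ∧ ∀ v, deg H v ≤ r}

lemma deg_mono {G H : Finset (Sym2 ℕ)} (h : G ⊆ H) (v : ℕ) : deg G v ≤ deg H v :=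
  Finset.card_le_card (Finset.filter_subset_filter _ h)

lemma deg_erase_of_notMem {G : Finset (Sym2 ℕ)} {e : Sym2 ℕ} {v : ℕ} (hv : v ∉ e) :
    deg (G.erase e) v = deg G v := by
  unfold deg
  rw [Finset.filter_erase, Finset.erase_eq_of_notMem]
  simp [hv]

lemma deg_insert_of_notMem {G : Finset (Sym2 ℕ)} {e : Sym2 ℕ} {v : ℕ} (hv : v ∉ e) :
    deg (insert e G) v = deg G v := by
  unfold deg
  rw [Finset.filter_insert, if_neg hv]

lemma deg_insert_of_mem {G : Finset (Sym2 ℕ)} {e : Sym2 ℕ} {v : ℕ} (he : e ∉ G) (hv : v ∈ e) :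
    deg (insert e G) v = deg G v + 1 := by
  unfold deg
  rw [Finset.filter_insert, if_pos hv, Finset.card_insert_of_notMem (by simp [he])]

lemma deg_erase_add_one {G : Finset (Sym2 ℕ)} {e : Sym2 ℕ} {v : ℕ} (he : e ∈ G) (hv : v ∈ e) :
    deg G v = deg (G.erase e) v + 1 := by
  unfold deg
  rw [Finset.filter_erase, Finset.card_erase_add_one (by simp [he, hv])]

lemma deg_le_of_avoid {n k : ℕ} {G : Finset (Sym2 ℕ)} (hG : G ⊆ EK n)
    (S : Finset ℕ) (hS : S ⊆ Finset.Icc 1 n) (_hkS : k ∈ S)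
    (h : ∀ j ∈ S, s(k, j) ∉ G) : deg G k ≤ n - S.card := by
  have hsub : G.filter (fun e => k ∈ e) ⊆ (Finset.Icc 1 n \ S).image (fun v => s(k, v)) := by
    intro e he
    rw [Finset.mem_filter] at he
    obtain ⟨heG, hke⟩ := he
    have heE := hG heG
    rw [EK, Finset.mem_filter] at heE
    induction e using Sym2.inductionOn with
    | hf a b =>
      rw [Sym2.mem_iff] at hke
      rw [Finset.mem_image]
      have hab : a ∈ Finset.Icc 1 n ∧ b ∈ Finset.Icc 1 n := by
        have := heE.1
        rw [Finset.mem_sym2_iff] at this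
        exact ⟨this a (by simp), this b (by simp)⟩
      rcases hke with h1 | h1
      · refine ⟨b, ?_, by rw [h1]⟩
        rw [Finset.mem_sdiff]
        exact ⟨hab.2, fun hbS => h b hbS (h1 ▸ heG)⟩
      · refine ⟨a, ?_, by rw [h1, Sym2.eq_swap]⟩
        rw [Finset.mem_sdiff]
        exact ⟨hab.1, fun haS => h a haS (by rw [Sym2.eq_swap]; exact h1 ▸ heG)⟩
  calc deg G k ≤ ((Finset.Icc 1 n \ S).image (fun v => s(k, v))).card :=
        Finset.card_le_card hsub
    _ ≤ (Finset.Icc 1 n \ S).card := Finset.card_image_le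
    _ = n - S.card := by
        rw [Finset.card_sdiff_of_subset hS, Nat.card_Icc]; omega

def Ak (n k : ℕ) : Set (Finset (Sym2 ℕ)) :=
  {G ∈ MK n (n - 2) | (∀ i ∈ Finset.Icc 1 (k - 1), s(i, i + 1) ∉ G) ∧
    deg G 1 = n - 2 ∧ (∀ i ∈ Finset.Icc 2 (k - 1), deg G i = n - 3) ∧
    deg G k < n - 2}

def Bset (n k : ℕ) : Set (Finset (Sym2 ℕ)) :=
  {G ∈ Ak n k | s(k, k + 1) ∉ G ∧ deg G (k + 1) < n - 2 ∧ deg G k = n - 3}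

def Cset (n k i : ℕ) : Set (Finset (Sym2 ℕ)) :=
  {G ∈ Ak n k | ∀ j ∈ Finset.Icc (k + 1) i, s(k, j) ∉ G ∧ deg G j = n - 2}

lemma edge_mem_EK {n a b : ℕ} (ha : a ∈ Finset.Icc 1 n) (hb : b ∈ Finset.Icc 1 n)
    (hab : a ≠ b) : s(a, b) ∈ EK n := by
  rw [EK, Finset.mem_filter, Finset.mk_mem_sym2_iff, Sym2.mk_isDiag_iff]
  exact ⟨⟨ha, hb⟩, hab⟩

lemma diag_notMem {n k : ℕ} {G : Finset (Sym2 ℕ)} (hG : G ⊆ EK n) : s(k, k) ∉ G := by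
  intro h
  have := hG h
  rw [EK, Finset.mem_filter] at this
  exact this.2 (by simp)

lemma erase_mem_Ak {n k i : ℕ} {G : Finset (Sym2 ℕ)} (hk : 2 ≤ k) (hi : k + 1 ≤ i)
    (hG : G ∈ Ak n k) : G.erase s(k, i) ∈ Ak n k := by
  obtain ⟨⟨hsub, hdeg⟩, hnm, h1, hmid, hdk⟩ := hG
  refine ⟨⟨(Finset.erase_subset _ _).trans hsub,
      fun v => (deg_mono (Finset.erase_subset _ _) v).trans (hdeg v)⟩,
    fun j hj hmem => hnm j hj (Finset.erase_subset _ _ hmem),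
    by rw [deg_erase_of_notMem (by rw [Sym2.mem_iff]; omega)]; exact h1,
    fun j hj => ?_,
    lt_of_le_of_lt (deg_mono (Finset.erase_subset _ _) k) hdk⟩
  rw [Finset.mem_Icc] at hj
  rw [deg_erase_of_notMem (by rw [Sym2.mem_iff]; omega)]
  exact hmid j (Finset.mem_Icc.mpr hj)

lemma insert_mem_Ak {n k i : ℕ} {G : Finset (Sym2 ℕ)} (hk : 2 ≤ k) (hi : k + 1 ≤ i)
    (hin : i ≤ n) (hG : G ∈ Ak n k) (hni : s(k, i) ∉ G) (hdi : deg G i + 1 ≤ n - 2)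
    (hdk : deg G k + 1 < n - 2) : insert s(k, i) G ∈ Ak n k := by
  obtain ⟨⟨hsub, hdeg⟩, hnm, h1, hmid, hdkG⟩ := hG
  have hkmem : k ∈ s(k, i) := by rw [Sym2.mem_iff]; left; rfl
  refine ⟨⟨?_, ?_⟩, ?_, ?_, ?_, ?_⟩
  · intro e he
    rcases Finset.mem_insert.mp he with rfl | he
    · exact edge_mem_EK (by rw [Finset.mem_Icc]; omega) (by rw [Finset.mem_Icc]; omega)
        (by omega)
    · exact hsub he
  · intro v
    by_cases hv : v ∈ s(k, i)
    · rw [deg_insert_of_mem hni hv]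
      rw [Sym2.mem_iff] at hv
      rcases hv with rfl | rfl
      · omega
      · omega
    · rw [deg_insert_of_notMem hv]; exact hdeg v
  · intro j hj hmem
    rw [Finset.mem_Icc] at hj
    rcases Finset.mem_insert.mp hmem with heq | hmem
    · rw [Sym2.eq_iff] at heq; omega
    · exact hnm j (Finset.mem_Icc.mpr hj) hmem
  · rw [deg_insert_of_notMem (by rw [Sym2.mem_iff]; omega)]; exact h1
  · intro j hj
    rw [Finset.mem_Icc] at hj
    rw [deg_insert_of_notMem (by rw [Sym2.mem_iff]; omega)]
    exact hmid j (Finset.mem_Icc.mpr hj)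
  · rw [deg_insert_of_mem hni hkmem]; omega

lemma main_induction (n k : ℕ) (hn : 4 ≤ n) (hk : 2 ≤ k) (hkn : k ≤ n - 1)
    (A : ℕ → Set (Finset (Sym2 ℕ))) (hAk : A k = Ak n k)
    (hstep : ∀ i, k + 1 ≤ i → i ≤ n →
      A i = A (i - 1) \
        {G ∈ A (i - 1) | G.erase s(k, i) ∈ A (i - 1) ∧ insert s(k, i) G ∈ A (i - 1)}) :
    ∀ i, k + 1 ≤ i → i ≤ n → A i = Bset n k ∪ Cset n k i := by
  intro i hi
  induction i, hi using Nat.le_induction with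
  | base =>
    intro hin
    rw [hstep (k + 1) le_rfl hin]
    simp only [Nat.add_sub_cancel]
    rw [hAk]
    ext G
    simp only [Set.mem_diff, Set.mem_union, Set.mem_setOf_eq]
    constructor
    · rintro ⟨hG, hN⟩
      by_cases hmem : s(k, k + 1) ∈ G
      · exact absurd ⟨hG, erase_mem_Ak hk le_rfl hG,
          by rwa [Finset.insert_eq_self.mpr hmem]⟩ hN
      · have herase : G.erase s(k, k + 1) = G := Finset.erase_eq_of_notMem hmem
        by_cases hd1 : deg G (k + 1) = n - 2
        · refine Or.inr ⟨hG, fun j hj => ?_⟩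
          rw [Finset.mem_Icc] at hj
          have : j = k + 1 := by omega
          subst this
          exact ⟨hmem, hd1⟩
        · by_cases hd2 : deg G k = n - 3
          · exact Or.inl ⟨hG, hmem, lt_of_le_of_ne (hG.1.2 (k + 1)) hd1, hd2⟩
          · exfalso
            apply hN
            refine ⟨hG, by rw [herase]; exact hG, insert_mem_Ak hk le_rfl (by omega) hG hmem ?_ ?_⟩
            · have := hG.1.2 (k + 1); omega
            · have := hG.2.2.2.2; omega
    · rintro (⟨hGA, hne, hdlt, hdeq⟩ | ⟨hGA, hC⟩)
      · refine ⟨hGA, fun hN => ?_⟩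
        have := hN.2.2.2.2.2.2
        rw [deg_insert_of_mem hne (by rw [Sym2.mem_iff]; left; rfl)] at this
        omega
      · refine ⟨hGA, fun hN => ?_⟩
        obtain ⟨hne, hdeq⟩ := hC (k + 1) (Finset.mem_Icc.mpr ⟨le_rfl, le_rfl⟩)
        have := hN.2.2.1.2 (k + 1)
        rw [deg_insert_of_mem hne (by rw [Sym2.mem_iff]; right; rfl)] at this
        omega
  | succ i hi IH =>
    intro hin'
    have hin : i ≤ n := by omega
    rw [hstep (i + 1) (by omega) hin']
    simp only [Nat.add_sub_cancel]
    rw [IH hin]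
    ext G
    simp only [Set.mem_diff, Set.mem_union, Set.mem_setOf_eq]
    constructor
    · rintro ⟨hG, hN⟩
      rcases hG with hB | hC
      · exact Or.inl hB
      · by_cases hmem : s(k, i + 1) ∈ G
        · exfalso
          apply hN
          refine ⟨Or.inr hC, Or.inr ⟨erase_mem_Ak hk (by omega) hC.1, fun j hj => ?_⟩,
            by rw [Finset.insert_eq_self.mpr hmem]; exact Or.inr hC⟩
          rw [Finset.mem_Icc] at hj
          obtain ⟨hne, hdeq⟩ := hC.2 j (Finset.mem_Icc.mpr hj)
          exact ⟨fun hmem' => hne (Finset.erase_subset _ _ hmem'),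
            by rw [deg_erase_of_notMem (by rw [Sym2.mem_iff]; omega)]; exact hdeq⟩
        · by_cases hdeq : deg G (i + 1) = n - 2
          · refine Or.inr ⟨hC.1, fun j hj => ?_⟩
            rw [Finset.mem_Icc] at hj
            by_cases hji : j = i + 1
            · subst hji; exact ⟨hmem, hdeq⟩
            · exact hC.2 j (Finset.mem_Icc.mpr ⟨hj.1, by omega⟩)
          · exfalso
            apply hN
            have herase : G.erase s(k, i + 1) = G := Finset.erase_eq_of_notMem hmem
            have hdk4 : deg G k + 1 < n - 2 := by
              have havoid : ∀ j ∈ Finset.Icc (k - 1) (i + 1), s(k, j) ∉ G := by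
                intro j hj
                rw [Finset.mem_Icc] at hj
                by_cases hj1 : j = k - 1
                · subst hj1
                  have := hC.1.2.1 (k - 1) (Finset.mem_Icc.mpr (by omega))
                  rw [show k - 1 + 1 = k by omega] at this
                  rw [Sym2.eq_swap]
                  exact this
                · by_cases hj2 : j = k
                  · subst hj2; exact diag_notMem hC.1.1.1
                  · by_cases hj3 : j = i + 1
                    · subst hj3; exact hmem
                    · exact (hC.2 j (Finset.mem_Icc.mpr (by omega))).1
              have hcount := deg_le_of_avoid hC.1.1.1 (Finset.Icc (k - 1) (i + 1))
                (fun x hx => by rw [Finset.mem_Icc] at hx ⊢; omega)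
                (by rw [Finset.mem_Icc]; omega) havoid
              rw [Nat.card_Icc] at hcount
              omega
            have hins : insert s(k, i + 1) G ∈ Cset n k i := by
              refine ⟨insert_mem_Ak hk (by omega) (by omega) hC.1 hmem ?_ hdk4,
                fun j hj => ?_⟩
              · have := hC.1.1.2 (i + 1); omega
              · rw [Finset.mem_Icc] at hj
                obtain ⟨hne, hd⟩ := hC.2 j (Finset.mem_Icc.mpr hj)
                refine ⟨fun hmem' => ?_, ?_⟩
                · rcases Finset.mem_insert.mp hmem' with heq | h'
                  · rw [Sym2.eq_iff] at heq; omega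
                  · exact hne h'
                · rw [deg_insert_of_notMem (by rw [Sym2.mem_iff]; omega)]; exact hd
            exact ⟨Or.inr hC, by rw [herase]; exact Or.inr hC, Or.inr hins⟩
    · rintro (hB | hC')
      · refine ⟨Or.inl hB, fun hN => ?_⟩
        obtain ⟨_, hera, hins⟩ := hN
        by_cases hmem : s(k, i + 1) ∈ G
        · have hdegE : deg G k = deg (G.erase s(k, i + 1)) k + 1 :=
            deg_erase_add_one hmem (by rw [Sym2.mem_iff]; left; rfl)
          rcases hera with hB' | hC''
          · have h1 := hB'.2.2.2
            have h2 := hB.2.2.2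
            omega
          · have h1 := (hC''.2 (k + 1) (Finset.mem_Icc.mpr ⟨le_rfl, hi⟩)).2
            rw [deg_erase_of_notMem (by rw [Sym2.mem_iff]; omega)] at h1
            have h2 := hB.2.2.1
            omega
        · have hAkm : insert s(k, i + 1) G ∈ Ak n k := by
            rcases hins with h | h
            · exact h.1
            · exact h.1
          have h1 := hAkm.2.2.2.2
          rw [deg_insert_of_mem hmem (by rw [Sym2.mem_iff]; left; rfl)] at h1
          have h2 := hB.2.2.2
          omega
      · have hC : G ∈ Cset n k i :=
          ⟨hC'.1, fun j hj => hC'.2 j (Finset.Icc_subset_Icc_right (by omega) hj)⟩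
        obtain ⟨hne, hdeq⟩ := hC'.2 (i + 1) (Finset.mem_Icc.mpr ⟨by omega, le_rfl⟩)
        refine ⟨Or.inr hC, fun hN => ?_⟩
        obtain ⟨_, hera, hins⟩ := hN
        have hAkm : insert s(k, i + 1) G ∈ Ak n k := by
          rcases hins with h | h
          · exact h.1
          · exact h.1
        have h1 := hAkm.1.2 (i + 1)
        rw [deg_insert_of_mem hne (by rw [Sym2.mem_iff]; right; rfl)] at h1
        omega

/-- Proposition 3.6(2) (Step k): starting from `A_{k,k} = B_{k-1,k}` and performing,
for `i = k+1, …, n`, the element matching using the vertex `{k,i}` (removing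
`N_{k,i} = {G ∈ A_{k,i-1} : G - {k,i} ∈ A_{k,i-1} and G + {k,i} ∈ A_{k,i-1}}`),
the remaining set of critical cells is `A_{k,n} = B_{k,k+1} ⊔ C_k`. -/
theorem step_k_critical_cells (n k : ℕ) (hn : 4 ≤ n) (hk : 2 ≤ k) (hkn : k ≤ n - 1)
    (A : ℕ → Set (Finset (Sym2 ℕ)))
    (hAk : A k = {G ∈ MK n (n - 2) | (∀ i ∈ Finset.Icc 1 (k - 1), s(i, i + 1) ∉ G) ∧
      deg G 1 = n - 2 ∧ (∀ i ∈ Finset.Icc 2 (k - 1), deg G i = n - 3) ∧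
      deg G k < n - 2})
    (hstep : ∀ i, k + 1 ≤ i → i ≤ n →
      A i = A (i - 1) \
        {G ∈ A (i - 1) | G.erase s(k, i) ∈ A (i - 1) ∧ insert s(k, i) G ∈ A (i - 1)}) :
    let B : Set (Finset (Sym2 ℕ)) :=
      {G ∈ A k | s(k, k + 1) ∉ G ∧ deg G (k + 1) < n - 2 ∧ deg G k = n - 3}
    let C : Set (Finset (Sym2 ℕ)) :=
      {G ∈ A k | ∀ i ∈ Finset.Icc (k + 1) n, s(k, i) ∉ G ∧ deg G i = n - 2}
    A n = B ∪ C ∧ Disjoint B C := by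
  intro B C
  have hAk' : A k = Ak n k := hAk
  have hB : B = Bset n k := by
    show {G ∈ A k | _} = _
    rw [hAk']
    rfl
  have hC : C = Cset n k n := by
    show {G ∈ A k | _} = _
    rw [hAk']
    rfl
  constructor
  · rw [hB, hC]
    exact main_induction n k hn hk hkn A hAk' hstep n (by omega) le_rfl
  · rw [hB, hC, Set.disjoint_left]
    intro G hGB hGC
    have h1 := hGB.2.2.1
    have h2 := (hGC.2 (k + 1) (Finset.mem_Icc.mpr ⟨le_rfl, by omega⟩)).2
    omega
end

section
/- Let n ≥ 3. For k ∈ [n−1], let C_k be defined as follows: C_1 = {G ∈ M_{n−2}(K_n) : for every i ∈ {2,...,n}, {1,i} ∉ G and deg_G(i) = n−2}, and for 2 ≤ k ≤ n−1, C_k = {G ∈ M_{n−2}(K_n) : {i,i+1} ∉ G for every i ∈ [k−1], deg_G(1) = n−2, deg_G(i) = n−3 for every i ∈ {2,...,k−1}, deg_G(k) < n−2, and for every j ∈ {k+1,...,n}, {k,j} ∉ G and deg_G(j) = n−2}. Then the sets C_1,...,C_{n−1} are pairwise disjoint, their union C = ⊔_{k∈[n−1]} C_k has cardinality exactly n−1,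 and every G ∈ C has exactly C(n−1,2) edges. -/
lemma mk_mem_EK {n a b : ℕ} : s(a,b) ∈ EK n ↔ (1 ≤ a ∧ a ≤ n ∧ 1 ≤ b ∧ b ≤ n ∧ a ≠ b) := by
  simp [EK, Finset.mem_sym2_iff, Sym2.mem_iff, Finset.mem_Icc]
  tauto

lemma deg_eq {n : ℕ} {H : Finset (Sym2 ℕ)} (hH : H ⊆ EK n) (v : ℕ) :
    deg H v = ((Finset.Icc 1 n).filter (fun w => s(v,w) ∈ H)).card := by
  have himg : H.filter (fun e => v ∈ e)
      = ((Finset.Icc 1 n).filter (fun w => s(v,w) ∈ H)).image (fun w => s(v,w)) := by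
    ext e
    simp only [Finset.mem_filter, Finset.mem_image]
    constructor
    · rintro ⟨heH, hv⟩
      induction e using Sym2.ind with
      | _ a b =>
        have hEK := mk_mem_EK.1 (hH heH)
        rcases Sym2.mem_iff.1 hv with rfl | rfl
        · exact ⟨b, ⟨Finset.mem_Icc.2 ⟨hEK.2.2.1, hEK.2.2.2.1⟩, heH⟩, rfl⟩
        · refine ⟨a, ⟨Finset.mem_Icc.2 ⟨hEK.1, hEK.2.1⟩, ?_⟩, Sym2.eq_swap⟩
          rwa [Sym2.eq_swap]
    · rintro ⟨w, ⟨_, hw⟩, rfl⟩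
      exact ⟨hw, Sym2.mem_mk_left v w⟩
  rw [deg, himg, Finset.card_image_of_injective _ (fun x y h => (Sym2.congr_right).1 h)]

lemma deg_zero {n : ℕ} {H : Finset (Sym2 ℕ)} (hH : H ⊆ EK n) {v : ℕ}
    (hv : v ∉ Finset.Icc 1 n) : deg H v = 0 := by
  rw [deg, Finset.card_eq_zero, Finset.filter_eq_empty_iff]
  intro e he hve
  induction e using Sym2.ind with
  | _ a b =>
    have hEK := mk_mem_EK.1 (hH he)
    rcases Sym2.mem_iff.1 hve with rfl | rfl
    · exact hv (Finset.mem_Icc.2 ⟨hEK.1, hEK.2.1⟩)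
    · exact hv (Finset.mem_Icc.2 ⟨hEK.2.2.1, hEK.2.2.2.1⟩)

lemma forced {n : ℕ} {H : Finset (Sym2 ℕ)} (hH : H ⊆ EK n) (v : ℕ) (T : Finset ℕ)
    (hsub : (Finset.Icc 1 n).filter (fun w => s(v,w) ∈ H) ⊆ T)
    (hcard : T.card ≤ deg H v) : ∀ w ∈ T, s(v,w) ∈ H := by
  rw [deg_eq hH] at hcard
  have := Finset.eq_of_subset_of_card_le hsub hcard
  intro w hw
  rw [← this] at hw
  exact (Finset.mem_filter.1 hw).2

def GP (n k a b : ℕ) : Prop :=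
  1 ≤ a ∧ a ≤ n ∧ 1 ≤ b ∧ b ≤ n ∧ a ≠ b ∧
  ¬(b = a + 1 ∧ 1 ≤ a ∧ a ≤ k - 1) ∧ ¬(a = b + 1 ∧ 1 ≤ b ∧ b ≤ k - 1) ∧
  ¬(a = k ∧ k + 1 ≤ b) ∧ ¬(b = k ∧ k + 1 ≤ a)

instance (n k a b : ℕ) : Decidable (GP n k a b) := by unfold GP; infer_instance

def Gcrit (n k : ℕ) : Finset (Sym2 ℕ) :=
  ((Finset.Icc 1 n ×ˢ Finset.Icc 1 n).filter (fun p => GP n k p.1 p.2)).image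
    (fun p => s(p.1, p.2))

lemma mk_mem_Gcrit {n k a b : ℕ} : s(a,b) ∈ Gcrit n k ↔ GP n k a b := by
  rw [Gcrit, Finset.mem_image]
  constructor
  · rintro ⟨⟨c, d⟩, hp, heq⟩
    have hP : GP n k c d := (Finset.mem_filter.1 hp).2
    rcases Sym2.eq_iff.1 heq with ⟨rfl, rfl⟩ | ⟨rfl, rfl⟩
    · exact hP
    · unfold GP at hP ⊢; tauto
  · intro hP
    refine ⟨(a, b), Finset.mem_filter.2 ⟨?_, hP⟩, rfl⟩
    rcases hP with ⟨h1,h2,h3,h4,_⟩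
    exact Finset.mem_product.2 ⟨Finset.mem_Icc.2 ⟨h1,h2⟩, Finset.mem_Icc.2 ⟨h3,h4⟩⟩

lemma Gcrit_subset_EK {n k : ℕ} : Gcrit n k ⊆ EK n := by
  intro e he
  induction e using Sym2.ind with
  | _ a b =>
    have := mk_mem_Gcrit.1 he
    exact mk_mem_EK.2 ⟨this.1, this.2.1, this.2.2.1, this.2.2.2.1, this.2.2.2.2.1⟩

lemma filter_Gcrit (n k v : ℕ) (B : Finset ℕ)
    (hB : ∀ w, (w ∈ Finset.Icc 1 n ∧ GP n k v w) ↔ w ∈ B) :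
    (Finset.Icc 1 n).filter (fun w => s(v,w) ∈ Gcrit n k) = B := by
  ext w
  rw [Finset.mem_filter, mk_mem_Gcrit, ← hB w]

lemma deg_Gcrit_one {n k : ℕ} (hn : 3 ≤ n) (hk2 : 2 ≤ k) (hk : k ≤ n - 1) :
    deg (Gcrit n k) 1 = n - 2 := by
  rw [deg_eq Gcrit_subset_EK, filter_Gcrit n k 1 (Finset.Icc 3 n) (by
    intro w; rw [Finset.mem_Icc, Finset.mem_Icc]; unfold GP; omega)]
  rw [Nat.card_Icc]; omega

lemma deg_Gcrit_mid {n k v : ℕ} (hn : 3 ≤ n) (hk : k ≤ n - 1) (hv1 : 2 ≤ v) (hv2 : v ≤ k - 1) :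
    deg (Gcrit n k) v = n - 3 := by
  rw [deg_eq Gcrit_subset_EK, filter_Gcrit n k v
    ((Finset.Icc 1 n) \ {v - 1, v, v + 1}) (by
    intro w
    rw [Finset.mem_sdiff, Finset.mem_insert, Finset.mem_insert, Finset.mem_singleton,
      Finset.mem_Icc]
    unfold GP; omega)]
  rw [Finset.card_sdiff_of_subset (by
    intro w hw
    rw [Finset.mem_insert, Finset.mem_insert, Finset.mem_singleton] at hw
    rw [Finset.mem_Icc]; omega)]
  have : ({v - 1, v, v + 1} : Finset ℕ).card = 3 := by
    rw [Finset.card_insert_of_notMem (by simp only [Finset.mem_insert, Finset.mem_singleton]; omega),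
      Finset.card_insert_of_notMem (by simp only [Finset.mem_insert, Finset.mem_singleton]; omega), Finset.card_singleton]
  rw [this, Nat.card_Icc]; omega

lemma deg_Gcrit_k {n k : ℕ} (hn : 3 ≤ n) (hk1 : 1 ≤ k) (hk : k ≤ n - 1) :
    deg (Gcrit n k) k = k - 2 := by
  rw [deg_eq Gcrit_subset_EK, filter_Gcrit n k k (Finset.Icc 1 (k - 2)) (by
    intro w; rw [Finset.mem_Icc, Finset.mem_Icc]; unfold GP; omega)]
  rw [Nat.card_Icc]; omega

lemma deg_Gcrit_top {n k v : ℕ} (hn : 3 ≤ n) (hk1 : 1 ≤ k) (hk : k ≤ n - 1)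
    (hv1 : k + 1 ≤ v) (hv2 : v ≤ n) : deg (Gcrit n k) v = n - 2 := by
  rw [deg_eq Gcrit_subset_EK, filter_Gcrit n k v ((Finset.Icc 1 n) \ {k, v}) (by
    intro w
    rw [Finset.mem_sdiff, Finset.mem_insert, Finset.mem_singleton, Finset.mem_Icc]
    unfold GP; omega)]
  rw [Finset.card_sdiff_of_subset (by
    intro w hw
    rw [Finset.mem_insert, Finset.mem_singleton] at hw
    rw [Finset.mem_Icc]; omega), Finset.card_pair (by omega), Nat.card_Icc]
  omega

lemma Gcrit_mem_MK {n k : ℕ} (hn : 3 ≤ n) (hk1 : 1 ≤ k) (hk : k ≤ n - 1) :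
    Gcrit n k ∈ MK n (n - 2) := by
  refine ⟨Gcrit_subset_EK, fun v => ?_⟩
  by_cases hv : v ∈ Finset.Icc 1 n
  · rw [Finset.mem_Icc] at hv
    by_cases hvk : v = k
    · subst hvk; rw [deg_Gcrit_k hn hk1 hk]; omega
    · by_cases hv1 : v = 1
      · subst hv1; rw [deg_Gcrit_one hn (by omega) hk]
      · by_cases hmid : v ≤ k - 1
        · rw [deg_Gcrit_mid hn hk (by omega) hmid]; omega
        · rw [deg_Gcrit_top hn hk1 hk (by omega) hv.2]
  · rw [deg_zero Gcrit_subset_EK hv]; omega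

lemma cons_not_mem_Gcrit {n k i : ℕ} (h1 : 1 ≤ i) (h2 : i ≤ k - 1) :
    s(i, i + 1) ∉ Gcrit n k := by
  intro h
  have := mk_mem_Gcrit.1 h
  unfold GP at this; omega

lemma top_not_mem_Gcrit {n k j : ℕ} (h1 : k + 1 ≤ j) : s(k, j) ∉ Gcrit n k := by
  intro h
  have := mk_mem_Gcrit.1 h
  unfold GP at this; omega

lemma Gcrit_mem_C1 {n : ℕ} (hn : 3 ≤ n) :
    Gcrit n 1 ∈ MK n (n - 2) ∧
      ∀ i, 2 ≤ i → i ≤ n → s(1, i) ∉ Gcrit n 1 ∧ deg (Gcrit n 1) i = n - 2 := by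
  refine ⟨Gcrit_mem_MK hn le_rfl (by omega), fun i hi1 hi2 => ?_⟩
  exact ⟨top_not_mem_Gcrit hi1, deg_Gcrit_top hn le_rfl (by omega) hi1 hi2⟩

lemma Gcrit_mem_Ck {n k : ℕ} (hn : 3 ≤ n) (hk2 : 2 ≤ k) (hk : k ≤ n - 1) :
    Gcrit n k ∈ MK n (n - 2) ∧
      (∀ i ∈ Finset.Icc 1 (k - 1), s(i, i + 1) ∉ Gcrit n k) ∧
      deg (Gcrit n k) 1 = n - 2 ∧
      (∀ i ∈ Finset.Icc 2 (k - 1), deg (Gcrit n k) i = n - 3) ∧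
      deg (Gcrit n k) k < n - 2 ∧
      ∀ j ∈ Finset.Icc (k + 1) n, s(k, j) ∉ Gcrit n k ∧ deg (Gcrit n k) j = n - 2 := by
  refine ⟨Gcrit_mem_MK hn (by omega) hk, ?_, deg_Gcrit_one hn hk2 hk, ?_, ?_, ?_⟩
  · intro i hi
    rw [Finset.mem_Icc] at hi
    exact cons_not_mem_Gcrit hi.1 hi.2
  · intro i hi
    rw [Finset.mem_Icc] at hi
    exact deg_Gcrit_mid hn hk hi.1 hi.2
  · rw [deg_Gcrit_k hn (by omega) hk]; omega
  · intro j hj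
    rw [Finset.mem_Icc] at hj
    exact ⟨top_not_mem_Gcrit hj.1, deg_Gcrit_top hn (by omega) hk hj.1 hj.2⟩

lemma diag_not_mem {n : ℕ} {G : Finset (Sym2 ℕ)} (hGE : G ⊆ EK n) {v w : ℕ}
    (h : s(v,w) ∈ G) : v ≠ w := (mk_mem_EK.1 (hGE h)).2.2.2.2

lemma pivot_low {n k : ℕ} {G : Finset (Sym2 ℕ)} (hn : 3 ≤ n) (hk2 : 2 ≤ k) (hk : k ≤ n - 1)
    (hGE : G ⊆ EK n)
    (hcons : ∀ i ∈ Finset.Icc 1 (k - 1), s(i, i + 1) ∉ G)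
    (hd1 : deg G 1 = n - 2)
    (hdm : ∀ i ∈ Finset.Icc 2 (k - 1), deg G i = n - 3)
    {p q : ℕ} (hp1 : 1 ≤ p) (hp2 : p ≤ k - 1) (hq1 : 1 ≤ q) (hq2 : q ≤ n)
    (h1 : q ≠ p - 1) (h2 : q ≠ p) (h3 : q ≠ p + 1) : s(p, q) ∈ G := by
  by_cases hp : p = 1
  · subst hp
    refine forced hGE 1 ((Finset.Icc 1 n) \ {1, 2}) ?_ ?_ q ?_
    · intro w hw
      rw [Finset.mem_filter] at hw
      rw [Finset.mem_sdiff, Finset.mem_insert, Finset.mem_singleton]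
      refine ⟨hw.1, ?_⟩
      rintro (rfl | rfl)
      · exact diag_not_mem hGE hw.2 rfl
      · exact hcons 1 (Finset.mem_Icc.2 ⟨le_rfl, by omega⟩) hw.2
    · rw [hd1, Finset.card_sdiff_of_subset (by
        intro w hw
        rw [Finset.mem_insert, Finset.mem_singleton] at hw
        rw [Finset.mem_Icc]; omega), Finset.card_pair (by omega), Nat.card_Icc]
      omega
    · rw [Finset.mem_sdiff, Finset.mem_insert, Finset.mem_singleton, Finset.mem_Icc]
      omega
  · have hp2' : 2 ≤ p := by omega
    refine forced hGE p ((Finset.Icc 1 n) \ {p - 1, p, p + 1}) ?_ ?_ q ?_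
    · intro w hw
      rw [Finset.mem_filter] at hw
      rw [Finset.mem_sdiff, Finset.mem_insert, Finset.mem_insert, Finset.mem_singleton]
      refine ⟨hw.1, ?_⟩
      rintro (rfl | rfl | rfl)
      · refine hcons (p - 1) (Finset.mem_Icc.2 ⟨by omega, by omega⟩) ?_
        have hpp : p - 1 + 1 = p := by omega
        rw [hpp, Sym2.eq_swap]
        exact hw.2
      · exact diag_not_mem hGE hw.2 rfl
      · exact hcons p (Finset.mem_Icc.2 ⟨by omega, hp2⟩) hw.2
    · rw [hdm p (Finset.mem_Icc.2 ⟨hp2', hp2⟩), Finset.card_sdiff_of_subset (by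
        intro w hw
        rw [Finset.mem_insert, Finset.mem_insert, Finset.mem_singleton] at hw
        rw [Finset.mem_Icc]; omega)]
      have : ({p - 1, p, p + 1} : Finset ℕ).card = 3 := by
        rw [Finset.card_insert_of_notMem (by
            simp only [Finset.mem_insert, Finset.mem_singleton]; omega),
          Finset.card_insert_of_notMem (by
            simp only [Finset.mem_singleton]; omega), Finset.card_singleton]
      rw [this, Nat.card_Icc]; omega
    · rw [Finset.mem_sdiff, Finset.mem_insert, Finset.mem_insert, Finset.mem_singleton,
        Finset.mem_Icc]
      omega

lemma pivot_top {n k : ℕ} {G : Finset (Sym2 ℕ)} (hn : 3 ≤ n) (hk1 : 1 ≤ k)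
    (hGE : G ⊆ EK n)
    (htop : ∀ j ∈ Finset.Icc (k + 1) n, s(k, j) ∉ G ∧ deg G j = n - 2)
    {p q : ℕ} (hp1 : k + 1 ≤ p) (hp2 : p ≤ n) (hq1 : 1 ≤ q) (hq2 : q ≤ n)
    (h1 : q ≠ k) (h2 : q ≠ p) : s(p, q) ∈ G := by
  refine forced hGE p ((Finset.Icc 1 n) \ {k, p}) ?_ ?_ q ?_
  · intro w hw
    rw [Finset.mem_filter] at hw
    rw [Finset.mem_sdiff, Finset.mem_insert, Finset.mem_singleton]
    refine ⟨hw.1, ?_⟩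
    rintro (rfl | rfl)
    · refine (htop p (Finset.mem_Icc.2 ⟨hp1, hp2⟩)).1 ?_
      rw [Sym2.eq_swap]; exact hw.2
    · exact diag_not_mem hGE hw.2 rfl
  · rw [(htop p (Finset.mem_Icc.2 ⟨hp1, hp2⟩)).2, Finset.card_sdiff_of_subset (by
      intro w hw
      rw [Finset.mem_insert, Finset.mem_singleton] at hw
      rw [Finset.mem_Icc]; omega), Finset.card_pair (by omega), Nat.card_Icc]
    omega
  · rw [Finset.mem_sdiff, Finset.mem_insert, Finset.mem_singleton, Finset.mem_Icc]
    omega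

lemma C1_unique {n : ℕ} (hn : 3 ≤ n) {G : Finset (Sym2 ℕ)} (hG : G ∈ MK n (n - 2))
    (h : ∀ i, 2 ≤ i → i ≤ n → s(1, i) ∉ G ∧ deg G i = n - 2) : G = Gcrit n 1 := by
  apply Finset.Subset.antisymm
  · intro e he
    induction e using Sym2.ind with
    | _ a b =>
      have hEK := mk_mem_EK.1 (hG.1 he)
      refine mk_mem_Gcrit.2 ⟨hEK.1, hEK.2.1, hEK.2.2.1, hEK.2.2.2.1, hEK.2.2.2.2, ?_, ?_, ?_, ?_⟩
      · rintro ⟨-, -, h0⟩; omega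
      · rintro ⟨-, -, h0⟩; omega
      · rintro ⟨rfl, hb⟩
        exact (h b hb hEK.2.2.2.1).1 he
      · rintro ⟨rfl, ha⟩
        refine (h a ha hEK.2.1).1 ?_
        rw [Sym2.eq_swap]; exact he
  · intro e he
    induction e using Sym2.ind with
    | _ a b =>
      have hg := mk_mem_Gcrit.1 he
      unfold GP at hg
      have ha2 : 2 ≤ a := by omega
      have hb2 : 2 ≤ b := by omega
      refine forced hG.1 a ((Finset.Icc 1 n) \ {1, a}) ?_ ?_ b ?_
      · intro w hw
        rw [Finset.mem_filter] at hw
        rw [Finset.mem_sdiff, Finset.mem_insert, Finset.mem_singleton]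
        refine ⟨hw.1, ?_⟩
        rintro (rfl | rfl)
        · refine (h a ha2 hg.2.1).1 ?_
          rw [Sym2.eq_swap]; exact hw.2
        · exact diag_not_mem hG.1 hw.2 rfl
      · rw [(h a ha2 hg.2.1).2, Finset.card_sdiff_of_subset (by
          intro w hw
          rw [Finset.mem_insert, Finset.mem_singleton] at hw
          rw [Finset.mem_Icc]; omega), Finset.card_pair (by omega), Nat.card_Icc]
        omega
      · rw [Finset.mem_sdiff, Finset.mem_insert, Finset.mem_singleton, Finset.mem_Icc]
        omega

lemma Ck_unique {n k : ℕ} (hn : 3 ≤ n) (hk2 : 2 ≤ k) (hk : k ≤ n - 1)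
    {G : Finset (Sym2 ℕ)} (hG : G ∈ MK n (n - 2))
    (hcons : ∀ i ∈ Finset.Icc 1 (k - 1), s(i, i + 1) ∉ G)
    (hd1 : deg G 1 = n - 2)
    (hdm : ∀ i ∈ Finset.Icc 2 (k - 1), deg G i = n - 3)
    (htop : ∀ j ∈ Finset.Icc (k + 1) n, s(k, j) ∉ G ∧ deg G j = n - 2) :
    G = Gcrit n k := by
  apply Finset.Subset.antisymm
  · intro e he
    induction e using Sym2.ind with
    | _ a b =>
      have hEK := mk_mem_EK.1 (hG.1 he)
      refine mk_mem_Gcrit.2 ⟨hEK.1, hEK.2.1, hEK.2.2.1, hEK.2.2.2.1, hEK.2.2.2.2, ?_, ?_, ?_, ?_⟩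
      · rintro ⟨rfl, ha1, ha2⟩
        exact hcons a (Finset.mem_Icc.2 ⟨ha1, ha2⟩) he
      · rintro ⟨rfl, hb1, hb2⟩
        refine hcons b (Finset.mem_Icc.2 ⟨hb1, hb2⟩) ?_
        rw [Sym2.eq_swap]; exact he
      · rintro ⟨rfl, hb⟩
        exact (htop b (Finset.mem_Icc.2 ⟨hb, hEK.2.2.2.1⟩)).1 he
      · rintro ⟨rfl, ha⟩
        refine (htop a (Finset.mem_Icc.2 ⟨ha, hEK.2.1⟩)).1 ?_
        rw [Sym2.eq_swap]; exact he
  · intro e he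
    induction e using Sym2.ind with
    | _ a b =>
      have hg := mk_mem_Gcrit.1 he
      unfold GP at hg
      obtain ⟨ha1, ha2, hb1, hb2, hab, h6, h7, h8, h9⟩ := hg
      by_cases hta : k + 1 ≤ a
      · exact pivot_top hn (by omega) hG.1 htop hta ha2 hb1 hb2 (by omega) (by omega)
      · by_cases htb : k + 1 ≤ b
        · rw [Sym2.eq_swap]
          exact pivot_top hn (by omega) hG.1 htop htb hb2 ha1 ha2 (by omega) (by omega)
        · -- both ≤ k
          rcases Nat.lt_or_ge a b with hlt | hge
          · exact pivot_low hn hk2 hk hG.1 hcons hd1 hdm ha1 (by omega) hb1 hb2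
              (by omega) (by omega) (by omega)
          · rw [Sym2.eq_swap]
            exact pivot_low hn hk2 hk hG.1 hcons hd1 hdm hb1 (by omega) ha1 ha2
              (by omega) (by omega) (by omega)

lemma handshake {n : ℕ} {H : Finset (Sym2 ℕ)} (hH : H ⊆ EK n) :
    ∑ v ∈ Finset.Icc 1 n, deg H v = 2 * H.card := by
  have h1 : ∀ v, deg H v = ∑ e ∈ H, if v ∈ e then 1 else 0 := by
    intro v; rw [deg, Finset.card_filter]
  calc ∑ v ∈ Finset.Icc 1 n, deg H v
      = ∑ v ∈ Finset.Icc 1 n, ∑ e ∈ H, if v ∈ e then 1 else 0 := by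
        exact Finset.sum_congr rfl fun v _ => h1 v
    _ = ∑ e ∈ H, ∑ v ∈ Finset.Icc 1 n, if v ∈ e then 1 else 0 := Finset.sum_comm
    _ = ∑ e ∈ H, 2 := by
        refine Finset.sum_congr rfl fun e he => ?_
        rw [← Finset.card_filter]
        induction e using Sym2.ind with
        | _ a b =>
          have hEK := mk_mem_EK.1 (hH he)
          have : (Finset.Icc 1 n).filter (fun v => v ∈ s(a,b)) = {a, b} := by
            ext v
            rw [Finset.mem_filter, Finset.mem_insert, Finset.mem_singleton, Finset.mem_Icc,
              Sym2.mem_iff]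
            constructor
            · rintro ⟨_, h⟩; exact h
            · rintro (rfl | rfl)
              · exact ⟨⟨hEK.1, hEK.2.1⟩, Or.inl rfl⟩
              · exact ⟨⟨hEK.2.2.1, hEK.2.2.2.1⟩, Or.inr rfl⟩
          rw [this, Finset.card_pair hEK.2.2.2.2]
    _ = 2 * H.card := by rw [Finset.sum_const, smul_eq_mul, Nat.mul_comm]

lemma sum_const_deg {n k a b c : ℕ} (h : ∀ v ∈ Finset.Ioc a b, deg (Gcrit n k) v = c) :
    ∑ v ∈ Finset.Ioc a b, deg (Gcrit n k) v = (b - a) * c := by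
  rw [Finset.sum_congr rfl h, Finset.sum_const, smul_eq_mul, Nat.card_Ioc]

lemma card_Gcrit {n k : ℕ} (hn : 3 ≤ n) (hk1 : 1 ≤ k) (hk : k ≤ n - 1) :
    2 * (Gcrit n k).card = (n - 1) * (n - 2) := by
  rw [← handshake (Gcrit_subset_EK (n := n) (k := k))]
  have h0 : Finset.Icc 1 n = Finset.Ioc 0 n := by rw [← Finset.Icc_add_one_left_eq_Ioc]; rfl
  rw [h0, ← Finset.sum_Ioc_consecutive _ (Nat.zero_le k) (by omega : k ≤ n)]
  have htop : ∑ v ∈ Finset.Ioc k n, deg (Gcrit n k) v = (n - k) * (n - 2) :=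
    sum_const_deg (fun v hv => by
      rw [Finset.mem_Ioc] at hv
      exact deg_Gcrit_top hn hk1 hk (by omega) hv.2)
  rw [htop]
  have hkk : k - 1 + 1 = k := by omega
  rw [← hkk, Finset.sum_Ioc_succ_top (Nat.zero_le _), hkk, deg_Gcrit_k hn hk1 hk]
  by_cases hk2 : k = 1
  · subst hk2
    simp only [Nat.sub_self, Finset.Ioc_self, Finset.sum_empty]
    zify [show 2 ≤ n by omega, show 1 ≤ n by omega, show 1 ≤ n - 1 by omega]
    ring
  · rw [← Finset.sum_Ioc_consecutive _ (Nat.zero_le 1) (by omega : 1 ≤ k - 1)]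
    have h1 : ∑ v ∈ Finset.Ioc 0 1, deg (Gcrit n k) v = n - 2 := by
      rw [show (1 : ℕ) = 0 + 1 from rfl, Finset.sum_Ioc_succ_top (Nat.zero_le 0),
        Finset.Ioc_self, Finset.sum_empty]
      simpa using deg_Gcrit_one hn (by omega) hk
    have h2 : ∑ v ∈ Finset.Ioc 1 (k - 1), deg (Gcrit n k) v = (k - 1 - 1) * (n - 3) :=
      sum_const_deg (fun v hv => by
        rw [Finset.mem_Ioc] at hv
        exact deg_Gcrit_mid hn hk (by omega) hv.2)
    rw [h1, h2]
    zify [show 2 ≤ n by omega, show 3 ≤ n by omega, show 2 ≤ k by omega,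
      show k ≤ n by omega, show 1 ≤ k - 1 by omega, show 1 ≤ n by omega,
      show 1 ≤ k by omega]
    ring

lemma choose_aux {n : ℕ} (hn : 3 ≤ n) : 2 * ((n - 1).choose 2) = (n - 1) * (n - 2) := by
  obtain ⟨m, hm⟩ : ∃ m, n - 1 = m + 1 := ⟨n - 2, by omega⟩
  rw [Nat.choose_two_right, hm]
  simp only [Nat.add_sub_cancel]
  have hev : Even ((m + 1) * m) := by
    rcases Nat.even_or_odd m with h | h
    · exact h.mul_left (m + 1)
    · exact (Odd.add_one h).mul_right m
  rw [Nat.mul_div_cancel' hev.two_dvd, show n - 2 = m by omega]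

/-- The sets `C_1, …, C_{n-1}` of critical cells are pairwise disjoint, their union
`C = ⊔_{k ∈ [n-1]} C_k` has exactly `n - 1` elements, and every `G ∈ C` has exactly
`C(n-1,2)` edges. -/
theorem critical_cells_count (n : ℕ) (hn : 3 ≤ n)
    (C : ℕ → Set (Finset (Sym2 ℕ)))
    (hC1 : C 1 = {G ∈ MK n (n - 2) | ∀ i, 2 ≤ i → i ≤ n → s(1, i) ∉ G ∧ deg G i = n - 2})
    (hCk : ∀ k, 2 ≤ k → k ≤ n - 1 →
      C k = {G ∈ MK n (n - 2) | (∀ i ∈ Finset.Icc 1 (k - 1), s(i, i + 1) ∉ G) ∧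
        deg G 1 = n - 2 ∧ (∀ i ∈ Finset.Icc 2 (k - 1), deg G i = n - 3) ∧
        deg G k < n - 2 ∧
        ∀ j ∈ Finset.Icc (k + 1) n, s(k, j) ∉ G ∧ deg G j = n - 2}) :
    (∀ k ∈ Finset.Icc 1 (n - 1), ∀ l ∈ Finset.Icc 1 (n - 1), k ≠ l →
        Disjoint (C k) (C l)) ∧
    (⋃ k ∈ Finset.Icc 1 (n - 1), C k).ncard = n - 1 ∧
    (∀ G ∈ ⋃ k ∈ Finset.Icc 1 (n - 1), C k, G.card = (n - 1).choose 2) := by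
  have key : ∀ k, 1 ≤ k → k ≤ n - 1 → C k = {Gcrit n k} := by
    intro k h1 h2
    by_cases hk1 : k = 1
    · subst hk1
      rw [hC1]
      ext G
      simp only [Set.mem_setOf_eq, Set.mem_singleton_iff]
      constructor
      · rintro ⟨hm, h⟩
        exact C1_unique hn hm h
      · rintro rfl
        exact Gcrit_mem_C1 hn
    · rw [hCk k (by omega) h2]
      ext G
      simp only [Set.mem_setOf_eq, Set.mem_singleton_iff]
      constructor
      · rintro ⟨hm, hcons, hd1, hdm, hdk, htop⟩
        exact Ck_unique hn (by omega) h2 hm hcons hd1 hdm htop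
      · rintro rfl
        exact Gcrit_mem_Ck hn (by omega) h2
  have hne : ∀ k l, 1 ≤ k → 1 ≤ l → l ≤ n - 1 → k < l → Gcrit n k ≠ Gcrit n l := by
    intro k l hk1 hl1 hl2 hkl heq
    have h1 := deg_Gcrit_top hn hk1 (by omega) (by omega : k + 1 ≤ l) (by omega : l ≤ n)
    have h2 := deg_Gcrit_k hn hl1 hl2
    rw [heq] at h1
    omega
  have hU : (⋃ k ∈ Finset.Icc 1 (n - 1), C k)
      = ↑((Finset.Icc 1 (n - 1)).image (Gcrit n)) := by
    ext G
    simp only [Set.mem_iUnion, Finset.coe_image, Set.mem_image, Finset.mem_coe, exists_prop]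
    constructor
    · rintro ⟨k, hk, hG⟩
      have h := Finset.mem_Icc.1 hk
      rw [key k h.1 h.2] at hG
      exact ⟨k, hk, hG.symm⟩
    · rintro ⟨k, hk, rfl⟩
      have h := Finset.mem_Icc.1 hk
      exact ⟨k, hk, by rw [key k h.1 h.2]; rfl⟩
  refine ⟨?_, ?_, ?_⟩
  · intro k hk l hl hkl
    rw [Finset.mem_Icc] at hk hl
    rw [key k hk.1 hk.2, key l hl.1 hl.2, Set.disjoint_singleton]
    rcases lt_or_gt_of_ne hkl with h | h
    · exact hne k l hk.1 hl.1 hl.2 h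
    · exact (hne l k hl.1 hk.1 hk.2 h).symm
  · rw [hU, Set.ncard_coe_finset, Finset.card_image_of_injOn (by
      intro k hk l hl heq
      rw [Finset.mem_coe, Finset.mem_Icc] at hk hl
      by_contra hne'
      rcases lt_or_gt_of_ne hne' with h | h
      · exact hne k l hk.1 hl.1 hl.2 h heq
      · exact hne l k hl.1 hk.1 hk.2 h heq.symm), Nat.card_Icc]
    omega
  · intro G hG
    rw [hU, Finset.mem_coe, Finset.mem_image] at hG
    obtain ⟨k, hk, rfl⟩ := hG
    rw [Finset.mem_Icc] at hk
    have h1 := card_Gcrit hn hk.1 hk.2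
    have h2 := choose_aux hn
    exact Nat.eq_of_mul_eq_mul_left two_pos (h1.trans h2.symm)
end

section
/- Let n ≥ 2 and 1 ≤ k ≤ n−1. Set H_{k,0} = {G ∈ M_{n−1}(K_{n,n}) : {a_i,b_1} ∉ G and deg_G(a_i) = n−1 for every i ∈ [k−1], and deg_G(b_1) < n−k+1}, and for j = 1,...,n define N_{k,j} = {G ∈ H_{k,j−1} : G ∖ {{a_k,b_j}} ∈ H_{k,j−1} and G ∪ {{a_k,b_j}} ∈ H_{k,j−1}} and H_{k,j} = H_{k,j−1} ∖ N_{k,j}. Then H_{k,n} = {G ∈ M_{n−1}(K_{n,n}) : {a_i,b_1} ∉ G and deg_G(a_i) = n−1 for every i ∈ [k], and deg_G(b_1) < n−k}. -/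
/-- Vertices of complete bipartite graphs: `Sum.inl i` is the vertex `a_i`,
`Sum.inr j` is the vertex `b_j`. -/
abbrev BipV : Type := ℕ ⊕ ℕ

/-- Degree of vertex `v` in the edge set `H`. -/
def degB (H : Finset (Sym2 BipV)) (v : BipV) : ℕ := (H.filter (fun e => v ∈ e)).card

/-- Edge set of the complete bipartite graph `K_{m,n}`:
all edges `{a_i, b_j}` with `i ∈ [m]`, `j ∈ [n]`. -/
def EKbip (m n : ℕ) : Finset (Sym2 BipV) :=
  ((Finset.Icc 1 m) ×ˢ (Finset.Icc 1 n)).image (fun p => s(Sum.inl p.1, Sum.inr p.2))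

/-- The `r`-matching complex of `K_{m,n}`, as its set of faces. -/
def MBip (m n r : ℕ) : Set (Finset (Sym2 BipV)) :=
  {H | H ⊆ EKbip m n ∧ ∀ v, degB H v ≤ r}

open Finset

abbrev Ed (i j : ℕ) : Sym2 BipV := s(Sum.inl i, Sum.inr j)

lemma mem_Ed {v : BipV} {a b : ℕ} : v ∈ Ed a b ↔ v = Sum.inl a ∨ v = Sum.inr b := Sym2.mem_iff

lemma inl_mem_Ed {i a b : ℕ} : (Sum.inl i : BipV) ∈ Ed a b ↔ i = a := by
  simp [mem_Ed]

lemma inr_mem_Ed {j a b : ℕ} : (Sum.inr j : BipV) ∈ Ed a b ↔ j = b := by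
  simp [mem_Ed]

lemma Ed_eq_Ed {a b c d : ℕ} : Ed a b = Ed c d ↔ a = c ∧ b = d := by
  simp [Sym2.eq_iff]

lemma mem_EKbip {m n : ℕ} {e : Sym2 BipV} :
    e ∈ EKbip m n ↔ ∃ a b, a ∈ Icc 1 m ∧ b ∈ Icc 1 n ∧ e = Ed a b := by
  constructor
  · intro h
    obtain ⟨⟨a, b⟩, hp, rfl⟩ := Finset.mem_image.1 h
    exact ⟨a, b, (mem_product.1 hp).1, (mem_product.1 hp).2, rfl⟩
  · rintro ⟨a, b, ha, hb, rfl⟩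
    exact Finset.mem_image.2 ⟨⟨a, b⟩, mem_product.2 ⟨ha, hb⟩, rfl⟩

lemma Ed_mem_EKbip {m n a b : ℕ} :
    Ed a b ∈ EKbip m n ↔ a ∈ Icc 1 m ∧ b ∈ Icc 1 n := by
  rw [mem_EKbip]
  constructor
  · rintro ⟨c, d, hc, hd, h⟩
    obtain ⟨rfl, rfl⟩ := Ed_eq_Ed.1 h
    exact ⟨hc, hd⟩
  · rintro ⟨ha, hb⟩
    exact ⟨a, b, ha, hb, rfl⟩

lemma degB_mono {G G' : Finset (Sym2 BipV)} (h : G ⊆ G') (v : BipV) : degB G v ≤ degB G' v :=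
  card_le_card (filter_subset_filter _ h)

lemma degB_insert_of_mem {G : Finset (Sym2 BipV)} {e : Sym2 BipV} {v : BipV}
    (he : e ∉ G) (hv : v ∈ e) : degB (insert e G) v = degB G v + 1 := by
  unfold degB
  rw [filter_insert, if_pos hv, card_insert_of_notMem (fun h => he (mem_filter.1 h).1)]

lemma degB_insert_of_notMem {G : Finset (Sym2 BipV)} {e : Sym2 BipV} {v : BipV}
    (hv : v ∉ e) : degB (insert e G) v = degB G v := by
  unfold degB
  rw [filter_insert, if_neg hv]

lemma degB_erase_of_mem {G : Finset (Sym2 BipV)} {e : Sym2 BipV} {v : BipV}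
    (he : e ∈ G) (hv : v ∈ e) : degB (G.erase e) v + 1 = degB G v := by
  unfold degB
  rw [filter_erase, card_erase_add_one (mem_filter.2 ⟨he, hv⟩)]

lemma degB_erase_of_notMem {G : Finset (Sym2 BipV)} {e : Sym2 BipV} {v : BipV}
    (hv : v ∉ e) : degB (G.erase e) v = degB G v := by
  unfold degB
  rw [filter_erase]
  have hnm : e ∉ G.filter (fun e => v ∈ e) := fun h => hv (mem_filter.1 h).2
  rw [erase_eq_of_notMem hnm]

lemma degB_inl_le_sub {G : Finset (Sym2 BipV)} {n i j : ℕ} (hG : G ⊆ EKbip n n)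
    (hn : 2 ≤ n) (hj1 : 2 ≤ j) (hjn : j ≤ n)
    (h1 : Ed i 1 ∉ G) (h2 : Ed i j ∉ G) :
    degB G (Sum.inl i) ≤ n - 2 := by
  have hsub : G.filter (fun e => (Sum.inl i : BipV) ∈ e) ⊆
      (((Icc 1 n).erase 1).erase j).image (fun t => Ed i t) := by
    intro e he
    obtain ⟨hEG, hie⟩ := mem_filter.1 he
    obtain ⟨a, b, ha, hb, rfl⟩ := mem_EKbip.1 (hG hEG)
    obtain rfl := inl_mem_Ed.1 hie
    refine Finset.mem_image.2 ⟨b, mem_erase.2 ⟨?_, mem_erase.2 ⟨?_, hb⟩⟩, rfl⟩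
    · rintro rfl; exact h2 hEG
    · rintro rfl; exact h1 hEG
  have hc1 : (1 : ℕ) ∈ (Icc 1 n) := by simp [mem_Icc]; omega
  have hcj : j ∈ (Icc 1 n).erase 1 := mem_erase.2 ⟨by omega, by simp [mem_Icc]; omega⟩
  calc degB G (Sum.inl i) ≤ _ := card_le_card hsub
    _ ≤ (((Icc 1 n).erase 1).erase j).card := card_image_le
    _ = n - 2 := by
        rw [card_erase_of_mem hcj, card_erase_of_mem hc1, Nat.card_Icc]
        omega

lemma degB_inl_ge {G : Finset (Sym2 BipV)} {n i : ℕ}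
    (h : ∀ t ∈ Icc 1 n, Ed i t ∈ G) : n ≤ degB G (Sum.inl i) := by
  have hsub : (Icc 1 n).image (fun t => Ed i t) ⊆
      G.filter (fun e => (Sum.inl i : BipV) ∈ e) := by
    intro e he
    obtain ⟨t, ht, rfl⟩ := Finset.mem_image.1 he
    exact mem_filter.2 ⟨h t ht, inl_mem_Ed.2 rfl⟩
  have hle := card_le_card hsub
  rwa [card_image_of_injective _ (fun a b hab => (Ed_eq_Ed.1 hab).2), Nat.card_Icc,
    Nat.add_sub_cancel] at hle

lemma full_col {G : Finset (Sym2 BipV)} {n k t i : ℕ} (hG : G ⊆ EKbip n n)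
    (hk : k ∈ Icc 1 n) (hi : i ∈ Icc 1 n) (hik : i ≠ k)
    (hkt : Ed k t ∉ G) (hd : degB G (Sum.inr t) = n - 1) :
    Ed i t ∈ G := by
  have hsub : G.filter (fun e => (Sum.inr t : BipV) ∈ e) ⊆
      ((Icc 1 n).erase k).image (fun s => Ed s t) := by
    intro e he
    obtain ⟨hEG, hte⟩ := mem_filter.1 he
    obtain ⟨a, b, ha, hb, rfl⟩ := mem_EKbip.1 (hG hEG)
    obtain rfl := inr_mem_Ed.1 hte
    exact Finset.mem_image.2 ⟨a, mem_erase.2 ⟨fun h => hkt (h ▸ hEG), ha⟩, rfl⟩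
  have hcard : (((Icc 1 n).erase k).image (fun s => Ed s t)).card = n - 1 := by
    rw [card_image_of_injective _ (fun a b hab => (Ed_eq_Ed.1 hab).1),
      card_erase_of_mem hk, Nat.card_Icc]
    omega
  have heq : G.filter (fun e => (Sum.inr t : BipV) ∈ e) =
      ((Icc 1 n).erase k).image (fun s => Ed s t) :=
    eq_of_subset_of_card_le hsub (by rw [hcard]; exact hd.ge)
  have hmem : Ed i t ∈ G.filter (fun e => (Sum.inr t : BipV) ∈ e) :=
    heq ▸ Finset.mem_image.2 ⟨i, mem_erase.2 ⟨hik, hi⟩, rfl⟩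
  exact (mem_filter.1 hmem).1

def P0p (n k : ℕ) (G : Finset (Sym2 BipV)) : Prop :=
  G ⊆ EKbip n n ∧ (∀ v, degB G v ≤ n - 1) ∧
  (∀ i ∈ Icc 1 (k - 1), Ed i 1 ∉ G ∧ degB G (Sum.inl i) = n - 1) ∧
  degB G (Sum.inr 1) < n - k + 1

def Pstep (n k j : ℕ) (G : Finset (Sym2 BipV)) : Prop :=
  P0p n k G ∧ Ed k 1 ∉ G ∧
  ((degB G (Sum.inl k) = n - 1 ∧ degB G (Sum.inr 1) < n - k) ∨
   (degB G (Sum.inr 1) = n - k ∧ ∀ t ∈ Icc 2 j, Ed k t ∉ G ∧ degB G (Sum.inr t) = n - 1))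

lemma P0p_erase {n k j : ℕ} {G : Finset (Sym2 BipV)} (hk1 : 1 ≤ k) (h : P0p n k G) :
    P0p n k (G.erase (Ed k j)) := by
  obtain ⟨hsub, hdeg, hside, hb⟩ := h
  refine ⟨(erase_subset _ _).trans hsub,
    fun v => (degB_mono (erase_subset _ _) v).trans (hdeg v), ?_,
    (degB_mono (erase_subset _ _) _).trans_lt hb⟩
  intro i hi
  have hik : i ≠ k := by have := mem_Icc.1 hi; omega
  refine ⟨fun hmem => (hside i hi).1 (mem_of_mem_erase hmem), ?_⟩
  rw [degB_erase_of_notMem (by simp [inl_mem_Ed]; exact hik)]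
  exact (hside i hi).2

lemma P0p_insert_iff {n k j : ℕ} {G : Finset (Sym2 BipV)} (hn : 2 ≤ n) (hk1 : 1 ≤ k)
    (hkn : k ≤ n) (hj1 : 1 ≤ j) (hjn : j ≤ n)
    (h : P0p n k G) (he : Ed k j ∉ G) :
    P0p n k (insert (Ed k j) G) ↔
      (degB G (Sum.inl k) + 1 ≤ n - 1 ∧ degB G (Sum.inr j) + 1 ≤ n - 1 ∧
        (j = 1 → degB G (Sum.inr 1) + 1 < n - k + 1)) := by
  obtain ⟨hsub, hdeg, hside, hb⟩ := h
  constructor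
  · rintro ⟨-, hdeg', -, hb'⟩
    refine ⟨?_, ?_, ?_⟩
    · have h1 := hdeg' (Sum.inl k)
      rwa [degB_insert_of_mem he (inl_mem_Ed.2 rfl)] at h1
    · have h2 := hdeg' (Sum.inr j)
      rwa [degB_insert_of_mem he (inr_mem_Ed.2 rfl)] at h2
    · rintro rfl
      rwa [degB_insert_of_mem he (inr_mem_Ed.2 rfl)] at hb'
  · rintro ⟨h1, h2, h3⟩
    refine ⟨insert_subset_iff.2 ⟨Ed_mem_EKbip.2 ⟨mem_Icc.2 ⟨hk1, hkn⟩, mem_Icc.2 ⟨hj1, hjn⟩⟩, hsub⟩,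
      ?_, ?_, ?_⟩
    · intro v
      by_cases hv : v ∈ Ed k j
      · rcases mem_Ed.1 hv with rfl | rfl
        · rw [degB_insert_of_mem he hv]; exact h1
        · rw [degB_insert_of_mem he hv]; exact h2
      · rw [degB_insert_of_notMem hv]; exact hdeg v
    · intro i hi
      have hik : i ≠ k := by have := mem_Icc.1 hi; omega
      constructor
      · intro hmem
        rcases mem_insert.1 hmem with heq | hmem'
        · exact hik (Ed_eq_Ed.1 heq).1
        · exact (hside i hi).1 hmem'
      · rw [degB_insert_of_notMem (by simp [inl_mem_Ed]; exact hik)]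
        exact (hside i hi).2
    · by_cases hj : j = 1
      · subst hj
        rw [degB_insert_of_mem he (inr_mem_Ed.2 rfl)]
        exact h3 rfl
      · rw [degB_insert_of_notMem (by simp [inr_mem_Ed]; exact fun h => hj h.symm)]
        exact hb

lemma step_one {n k : ℕ} {G : Finset (Sym2 BipV)} (hn : 2 ≤ n) (hk1 : 1 ≤ k) (hkn : k ≤ n - 1) :
    (P0p n k G ∧ ¬(P0p n k (G.erase (Ed k 1)) ∧ P0p n k (insert (Ed k 1) G))) ↔
      Pstep n k 1 G := by
  constructor
  · rintro ⟨h, hnot⟩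
    have he : Ed k 1 ∉ G := by
      intro hmem
      exact hnot ⟨P0p_erase hk1 h, by rw [insert_eq_self.2 hmem]; exact h⟩
    have hiff := P0p_insert_iff hn hk1 (by omega) le_rfl (by omega) h he
    rw [erase_eq_of_notMem he] at hnot
    have hnins : ¬ P0p n k (insert (Ed k 1) G) := fun hh => hnot ⟨h, hh⟩
    rw [hiff] at hnins
    have hdk := h.2.1 (Sum.inl k)
    have hd1 := h.2.2.2
    refine ⟨h, he, ?_⟩
    by_cases hcase : degB G (Sum.inr 1) = n - k
    · exact Or.inr ⟨hcase, fun t ht => by have := mem_Icc.1 ht; omega⟩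
    · left
      refine ⟨?_, by omega⟩
      by_contra hne
      exact hnins ⟨by omega, by omega, fun _ => by omega⟩
  · rintro ⟨hP, he, hdisj⟩
    refine ⟨hP, ?_⟩
    rintro ⟨-, hins⟩
    rw [P0p_insert_iff hn hk1 (by omega) le_rfl (by omega) hP he] at hins
    obtain ⟨h1, h2, h3⟩ := hins
    have h4 := h3 rfl
    rcases hdisj with ⟨ha, hb⟩ | ⟨ha, -⟩ <;> omega

lemma step_j {n k j : ℕ} {G : Finset (Sym2 BipV)} (hn : 2 ≤ n) (hk1 : 1 ≤ k) (hkn : k ≤ n - 1)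
    (hj2 : 2 ≤ j) (hjn : j ≤ n) :
    (Pstep n k (j - 1) G ∧
      ¬(Pstep n k (j - 1) (G.erase (Ed k j)) ∧ Pstep n k (j - 1) (insert (Ed k j) G)))
      ↔ Pstep n k j G := by
  constructor
  · rintro ⟨⟨hP, he1, hdisj⟩, hnot⟩
    refine ⟨hP, he1, ?_⟩
    rcases hdisj with hL | ⟨ha, htail⟩
    · exact Or.inl hL
    · right
      refine ⟨ha, ?_⟩
      have hejG : Ed k j ∉ G := by
        intro hmem
        apply hnot
        constructor
        · refine ⟨P0p_erase hk1 hP, fun hh => he1 (mem_of_mem_erase hh), Or.inr ⟨?_, ?_⟩⟩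
          · rw [degB_erase_of_notMem (by simp [inr_mem_Ed]; omega)]; exact ha
          · intro t ht
            have htb := mem_Icc.1 ht
            refine ⟨fun hh => (htail t ht).1 (mem_of_mem_erase hh), ?_⟩
            rw [degB_erase_of_notMem (by simp [inr_mem_Ed]; omega)]
            exact (htail t ht).2
        · rw [insert_eq_self.2 hmem]
          exact ⟨hP, he1, Or.inr ⟨ha, htail⟩⟩
      have hdegj : degB G (Sum.inr j) = n - 1 := by
        by_contra hne
        have hlt : degB G (Sum.inr j) + 1 ≤ n - 1 := by
          have := hP.2.1 (Sum.inr j); omega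
        apply hnot
        rw [erase_eq_of_notMem hejG]
        refine ⟨⟨hP, he1, Or.inr ⟨ha, htail⟩⟩, ?_⟩
        have hdk2 : degB G (Sum.inl k) ≤ n - 2 := degB_inl_le_sub hP.1 hn hj2 hjn he1 hejG
        refine ⟨(P0p_insert_iff hn hk1 (by omega) (by omega) hjn hP hejG).2
          ⟨by omega, hlt, fun hh => by omega⟩, ?_, Or.inr ⟨?_, ?_⟩⟩
        · intro hh
          rcases mem_insert.1 hh with heq | hmem'
          · have := (Ed_eq_Ed.1 heq).2; omega
          · exact he1 hmem'
        · rw [degB_insert_of_notMem (by simp [inr_mem_Ed]; omega)]; exact ha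
        · intro t ht
          have htb := mem_Icc.1 ht
          constructor
          · intro hh
            rcases mem_insert.1 hh with heq | hmem'
            · have := (Ed_eq_Ed.1 heq).2; omega
            · exact (htail t ht).1 hmem'
          · rw [degB_insert_of_notMem (by simp [inr_mem_Ed]; omega)]
            exact (htail t ht).2
      intro t ht
      have htb := mem_Icc.1 ht
      by_cases htj : t = j
      · subst htj; exact ⟨hejG, hdegj⟩
      · exact htail t (mem_Icc.2 ⟨htb.1, by omega⟩)
  · rintro ⟨hP, he1, hdisj⟩
    constructor
    · refine ⟨hP, he1, ?_⟩
      rcases hdisj with hL | ⟨ha, htail⟩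
      · exact Or.inl hL
      · exact Or.inr ⟨ha, fun t ht => htail t
          (by have := mem_Icc.1 ht; exact mem_Icc.2 ⟨this.1, by omega⟩)⟩
    · rintro ⟨her, hins⟩
      rcases hdisj with ⟨ha, hb⟩ | ⟨ha, htail⟩
      · by_cases hejG : Ed k j ∈ G
        · have h1 : degB (G.erase (Ed k j)) (Sum.inl k) + 1 = degB G (Sum.inl k) :=
            degB_erase_of_mem hejG (inl_mem_Ed.2 rfl)
          have h2 : degB (G.erase (Ed k j)) (Sum.inr 1) = degB G (Sum.inr 1) :=
            degB_erase_of_notMem (by simp [inr_mem_Ed]; omega)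
          rcases her.2.2 with ⟨hx, -⟩ | ⟨hx, -⟩ <;> omega
        · have h1 := hins.1.2.1 (Sum.inl k)
          rw [degB_insert_of_mem hejG (inl_mem_Ed.2 rfl)] at h1
          omega
      · have h2j := htail j (mem_Icc.2 ⟨hj2, le_rfl⟩)
        have h1 := hins.1.2.1 (Sum.inr j)
        rw [degB_insert_of_mem h2j.1 (inr_mem_Ed.2 rfl)] at h1
        have hd := h2j.2
        omega

lemma final_char {n k : ℕ} {G : Finset (Sym2 BipV)} (hn : 2 ≤ n) (hk1 : 1 ≤ k)
    (hkn : k ≤ n - 1) :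
    Pstep n k n G ↔
      ((G ⊆ EKbip n n ∧ ∀ v, degB G v ≤ n - 1) ∧
       (∀ i ∈ Icc 1 k, Ed i 1 ∉ G ∧ degB G (Sum.inl i) = n - 1) ∧
       degB G (Sum.inr 1) < n - k) := by
  constructor
  · rintro ⟨⟨hsub, hdeg, hside, hb⟩, he1, hdisj⟩
    rcases hdisj with ⟨ha, hlt⟩ | ⟨ha, htail⟩
    · refine ⟨⟨hsub, hdeg⟩, ?_, hlt⟩
      intro i hi
      have hib := mem_Icc.1 hi
      by_cases hik : i = k
      · subst hik; exact ⟨he1, ha⟩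
      · exact hside i (mem_Icc.2 ⟨hib.1, by omega⟩)
    · exfalso
      have hpos : 0 < degB G (Sum.inr 1) := by omega
      unfold degB at hpos
      obtain ⟨e, heG⟩ := card_pos.1 hpos
      obtain ⟨heG', h1e⟩ := mem_filter.1 heG
      obtain ⟨a, b, haI, hbI, rfl⟩ := mem_EKbip.1 (hsub heG')
      obtain rfl := inr_mem_Ed.1 h1e
      have hak : a ≠ k := fun hh => he1 (hh ▸ heG')
      have hfull : ∀ t ∈ Icc 1 n, Ed a t ∈ G := by
        intro t ht
        have htb := mem_Icc.1 ht
        by_cases ht1 : t = 1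
        · subst ht1; exact heG'
        · have htt := htail t (mem_Icc.2 ⟨by omega, htb.2⟩)
          exact full_col hsub (mem_Icc.2 ⟨by omega, by omega⟩) haI hak htt.1 htt.2
      have hge := degB_inl_ge hfull
      have hle := hdeg (Sum.inl a)
      omega
  · rintro ⟨⟨hsub, hdeg⟩, hside, hb⟩
    have hk' := hside k (mem_Icc.2 ⟨hk1, le_rfl⟩)
    refine ⟨⟨hsub, hdeg, ?_, by omega⟩, hk'.1, Or.inl ⟨hk'.2, hb⟩⟩
    intro i hi
    have hib := mem_Icc.1 hi
    exact hside i (mem_Icc.2 ⟨hib.1, by omega⟩)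

/-- Step k for `K_{n,n}` (1 ≤ k ≤ n-1): starting from
`H_{k,0} = {G ∈ M_{n-1}(K_{n,n}) : {a_i,b_1} ∉ G and deg_G(a_i) = n-1 for i ∈ [k-1],
deg_G(b_1) < n-k+1}` and performing, for `j = 1, …, n`, the element matching using the
vertex `{a_k, b_j}`, the remaining set of critical cells is
`H_{k,n} = {G ∈ M_{n-1}(K_{n,n}) : {a_i,b_1} ∉ G and deg_G(a_i) = n-1 for i ∈ [k],
deg_G(b_1) < n-k}`. -/
theorem bipartite_step_k (n k : ℕ) (hn : 2 ≤ n) (hk1 : 1 ≤ k) (hkn : k ≤ n - 1)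
    (H : ℕ → Set (Finset (Sym2 BipV)))
    (hH0 : H 0 = {G ∈ MBip n n (n - 1) |
      (∀ i ∈ Finset.Icc 1 (k - 1),
        s(Sum.inl i, Sum.inr 1) ∉ G ∧ degB G (Sum.inl i) = n - 1) ∧
      degB G (Sum.inr 1) < n - k + 1})
    (hstep : ∀ j, 1 ≤ j → j ≤ n →
      H j = H (j - 1) \
        {G ∈ H (j - 1) | G.erase s(Sum.inl k, Sum.inr j) ∈ H (j - 1) ∧
          insert s(Sum.inl k, Sum.inr j) G ∈ H (j - 1)}) :
    H n = {G ∈ MBip n n (n - 1) |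
      (∀ i ∈ Finset.Icc 1 k,
        s(Sum.inl i, Sum.inr 1) ∉ G ∧ degB G (Sum.inl i) = n - 1) ∧
      degB G (Sum.inr 1) < n - k} := by
  have hmem0 : ∀ G : Finset (Sym2 BipV), G ∈ H 0 ↔ P0p n k G := by
    intro G
    rw [hH0]
    simp only [Set.mem_setOf_eq, MBip, P0p, Set.mem_sep_iff]
    tauto
  have key : ∀ j, 1 ≤ j → j ≤ n → ∀ G, G ∈ H j ↔ Pstep n k j G := by
    intro j
    induction j with
    | zero => omega
    | succ m ih =>
      intro h1 hn' G
      rcases Nat.lt_or_ge m 1 with hm | hm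
      · have hm0 : m = 0 := by omega
        subst hm0
        rw [hstep 1 le_rfl (by omega)]
        simp only [Nat.sub_self]
        simp only [Set.mem_diff, Set.mem_sep_iff, hmem0]
        constructor
        · rintro ⟨hA, hN⟩
          exact (step_one hn hk1 hkn).1 ⟨hA, fun hh => hN ⟨hA, hh.1, hh.2⟩⟩
        · intro h
          obtain ⟨hA, hN⟩ := (step_one hn hk1 hkn).2 h
          exact ⟨hA, fun hh => hN ⟨hh.2.1, hh.2.2⟩⟩
      · rw [hstep (m + 1) (by omega) hn']
        simp only [Nat.add_sub_cancel]
        have ihm := ih (by omega) (by omega)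
        simp only [Set.mem_diff, Set.mem_sep_iff, ihm]
        have hs := step_j (n := n) (k := k) (j := m + 1) (G := G) hn hk1 hkn (by omega) hn'
        simp only [Nat.add_sub_cancel] at hs
        constructor
        · rintro ⟨hA, hN⟩
          exact hs.1 ⟨hA, fun hh => hN ⟨hA, hh.1, hh.2⟩⟩
        · intro h
          obtain ⟨hA, hN⟩ := hs.2 h
          exact ⟨hA, fun hh => hN ⟨hh.2.1, hh.2.2⟩⟩
  ext G
  rw [key n (by omega) le_rfl G, final_char hn hk1 hkn]
  simp only [Set.mem_setOf_eq, MBip, Set.mem_sep_iff]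
end
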